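/- For every natural number n, f₂ᵗ(n) ≠ 0 if and only if there exist j < 8 and a prime p with p+2 prime such that 64n+8j+1 ≤ p and p+2 ≤ 64n+8j+8; i.e., the twin-prime 2-pattern is nonzero exactly when some sub-block of 8 consecutive integers inside {64n+1, …, 64n+64} contains a twin prime pair. -/
import Mathlib


/-- Level-1 pattern: binary encoding of primality of the block {8n+1, …, 8n+8}. -/
def f1 (n : ℕ) : ℕ := ∑ j ∈ Finset.range 8, if Nat.Prime (8 * n + 1 + j) then 2 ^ (7 - j) else 0

/-- Twin-prime level-2 pattern: encodes which sub-blocks of 8 consecutive integers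
inside a block of 64 consecutive integers carry a twin-prime 1-pattern. -/
def f2t (n : ℕ) : ℕ :=
  ∑ j ∈ Finset.range 8,
    if f1 (8 * n + j) ∈ ({10, 40, 106, 138, 160, 162} : Finset ℕ) then 2 ^ (7 - j) else 0

set_option maxHeartbeats 1000000 in
lemma f1_mem_iff (m : ℕ) :
    f1 m ∈ ({10, 40, 106, 138, 160, 162} : Finset ℕ) ↔
      ∃ p : ℕ, Nat.Prime p ∧ Nat.Prime (p + 2) ∧ 8*m+1 ≤ p ∧ p + 2 ≤ 8*m+8 := by
  constructor
  · intro h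
    simp only [f1, Finset.sum_range_succ, Finset.sum_range_zero] at h
    split_ifs at h <;>
    first
    | exact absurd h (by decide)
    | exact ⟨8*m+1, ‹Nat.Prime (8*m+1+0)›, ‹Nat.Prime (8*m+1+2)›, by omega, by omega⟩
    | exact ⟨8*m+1+2, ‹Nat.Prime (8*m+1+2)›, ‹Nat.Prime (8*m+1+4)›, by omega, by omega⟩
    | exact ⟨8*m+1+4, ‹Nat.Prime (8*m+1+4)›, ‹Nat.Prime (8*m+1+6)›, by omega, by omega⟩
  · rintro ⟨p, hp, hp2, hl, hr⟩
    have three : ∀ q : ℕ, Nat.Prime q → 3 ∣ q → q = 3 := fun q hq hd => by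
      rcases hq.eq_one_or_self_of_dvd 3 hd with h | h <;> omega
    have two : ∀ q : ℕ, Nat.Prime q → 2 ∣ q → q = 2 := fun q hq hd => by
      rcases hq.eq_one_or_self_of_dvd 2 hd with h | h <;> omega
    rcases Nat.eq_zero_or_pos m with rfl | hm
    · have : f1 0 = 106 := by decide
      simp [this]
    have e1 : ¬ Nat.Prime (8*m+1+1) := fun h => by have := two _ h (by omega); omega
    have e3 : ¬ Nat.Prime (8*m+1+3) := fun h => by have := two _ h (by omega); omega
    have e5 : ¬ Nat.Prime (8*m+1+5) := fun h => by have := two _ h (by omega); omega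
    have e7 : ¬ Nat.Prime (8*m+1+7) := fun h => by have := two _ h (by omega); omega
    have hpodd : p = 8*m+1+0 ∨ p = 8*m+1+2 ∨ p = 8*m+1+4 := by
      have h2 : ¬ 2 ∣ p := fun h => by have := two _ hp h; omega
      omega
    have key : (Nat.Prime (8*m+1+0) ∧ Nat.Prime (8*m+1+2)) ∨
        (Nat.Prime (8*m+1+2) ∧ Nat.Prime (8*m+1+4)) ∨
        (Nat.Prime (8*m+1+4) ∧ Nat.Prime (8*m+1+6)) := by
      rcases hpodd with rfl | rfl | rfl
      · exact Or.inl ⟨hp, by rw [show 8*m+1+2 = 8*m+1+0+2 by omega]; exact hp2⟩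
      · exact Or.inr (Or.inl ⟨hp, by rw [show 8*m+1+4 = 8*m+1+2+2 by omega]; exact hp2⟩)
      · exact Or.inr (Or.inr ⟨hp, by rw [show 8*m+1+6 = 8*m+1+4+2 by omega]; exact hp2⟩)
    clear hpodd hp hp2 hl hr
    have hmod : m % 3 = 0 ∨ m % 3 = 1 ∨ m % 3 = 2 := by omega
    simp only [f1, Finset.sum_range_succ, Finset.sum_range_zero, e1, e3, e5, e7, if_false]
    by_cases b0 : Nat.Prime (8*m+1+0) <;> by_cases b2 : Nat.Prime (8*m+1+2) <;>
      by_cases b4 : Nat.Prime (8*m+1+4) <;> by_cases b6 : Nat.Prime (8*m+1+6) <;>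
      simp only [b0, b2, b4, b6, if_true, if_false] <;>
    first
    | decide
    | (exfalso;
       first
       | (have hd : 3 ∣ (8*m+1+0) ∨ 3 ∣ (8*m+1+2) ∨ 3 ∣ (8*m+1+4) := by
            rcases hmod with h | h | h
            · right; left; omega
            · left; omega
            · right; right; omega
          rcases hd with hd | hd | hd
          · have := three _ b0 hd; omega
          · have := three _ b2 hd; omega
          · have := three _ b4 hd; omega)
       | (have hd : 3 ∣ (8*m+1+2) ∨ 3 ∣ (8*m+1+4) ∨ 3 ∣ (8*m+1+6) := by
            rcases hmod with h | h | h
            · left; omega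
            · right; right; omega
            · right; left; omega
          rcases hd with hd | hd | hd
          · have := three _ b2 hd; omega
          · have := three _ b4 hd; omega
          · have := three _ b6 hd; omega)
       | (rcases key with ⟨k1, k2⟩ | ⟨k1, k2⟩ | ⟨k1, k2⟩ <;>
          first | exact absurd k1 b0 | exact absurd k1 b2 | exact absurd k1 b4
                | exact absurd k2 b2 | exact absurd k2 b4 | exact absurd k2 b6))

lemma f2t_ne_zero_iff_aux (n : ℕ) :
    f2t n ≠ 0 ↔ ∃ j < 8, f1 (8 * n + j) ∈ ({10, 40, 106, 138, 160, 162} : Finset ℕ) := by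
  rw [f2t, ← not_iff_not, not_ne_iff, Finset.sum_eq_zero_iff]
  push_neg
  constructor
  · intro h j hj8 hmem
    have := h j (Finset.mem_range.mpr hj8)
    rw [if_pos hmem] at this
    exact absurd this (by positivity)
  · intro h j hj
    rw [Finset.mem_range] at hj
    rw [if_neg (h j hj)]

theorem f2t_ne_zero_iff (n : ℕ) :
    f2t n ≠ 0 ↔
      ∃ j < 8, ∃ p : ℕ, Nat.Prime p ∧ Nat.Prime (p + 2) ∧
        64 * n + 8 * j + 1 ≤ p ∧ p + 2 ≤ 64 * n + 8 * j + 8 := by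
  rw [f2t_ne_zero_iff_aux]
  constructor
  · rintro ⟨j, hj, hmem⟩
    obtain ⟨p, hp, hp2, hl, hr⟩ := (f1_mem_iff (8 * n + j)).mp hmem
    exact ⟨j, hj, p, hp, hp2, by omega, by omega⟩
  · rintro ⟨j, hj, p, hp, hp2, hl, hr⟩
    exact ⟨j, hj, (f1_mem_iff (8 * n + j)).mpr ⟨p, hp, hp2, by omega, by omega⟩⟩
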